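/- Let Γ be a connected G-arc-transitive bicirculant with at least three vertices over a cyclic subgroup H of G (so H ≤ G ≤ Aut(Γ), H cyclic and semiregular with exactly two orbits of equal size on V(Γ)). Let N be a normal subgroup of G that is maximal subject to having at least three orbits on V(Γ). Then: Γ is an r-cover of the quotient graph Γ_N, where r divides the valency of Γ; Γ_N is G/N-arc-transitive and is either a circulant or a bicirculant over HN/N; and the induced action of G/N on V(Γ_N) is faithful and is either quasiprimitive or bi-quasiprimitive. -/

import Mathlib

open SimpleGraph

namespace ATB

variable {V : Type*}

/-- `σ` is an automorphism of the graph `Γ`. -/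
def IsAut (Γ : SimpleGraph V) (σ : Equiv.Perm V) : Prop :=
  ∀ u v : V, Γ.Adj (σ u) (σ v) ↔ Γ.Adj u v

/-- The full automorphism group of `Γ`, as a subgroup of `Equiv.Perm V`. -/
def autGroup (Γ : SimpleGraph V) : Subgroup (Equiv.Perm V) where
  carrier := {σ | IsAut Γ σ}
  one_mem' := by intro u v; simp
  mul_mem' := by
    intro a b ha hb u v
    rw [show ((a * b) u) = a (b u) from rfl, show ((a * b) v) = a (b v) from rfl,
      ha (b u) (b v), hb u v]
  inv_mem' := by
    intro a ha u v
    have h := ha (a⁻¹ u) (a⁻¹ v)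
    rw [show a (a⁻¹ u) = u from a.apply_symm_apply u, show a (a⁻¹ v) = v from a.apply_symm_apply v] at h
    exact h.symm

/-- `G` is transitive on the vertices. -/
def VertexTrans (G : Subgroup (Equiv.Perm V)) : Prop := ∀ u v : V, ∃ σ ∈ G, σ u = v

/-- `G` is transitive on the arcs (ordered pairs of adjacent vertices) of `Γ`. -/
def ArcTrans (Γ : SimpleGraph V) (G : Subgroup (Equiv.Perm V)) : Prop :=
  ∀ u v u' v' : V, Γ.Adj u v → Γ.Adj u' v' → ∃ σ ∈ G, σ u = u' ∧ σ v = v'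

/-- `Γ` is arc-transitive (with respect to its full automorphism group). -/
def IsArcTransitive (Γ : SimpleGraph V) : Prop := ArcTrans Γ (autGroup Γ)

/-- A circulant graph: there is an automorphism of order `|V|` acting transitively,
i.e. a cyclic subgroup of the automorphism group acting regularly on the vertices. -/
def IsCirculant (Γ : SimpleGraph V) : Prop :=
  ∃ σ : Equiv.Perm V, IsAut Γ σ ∧ orderOf σ = Nat.card V ∧
    ∀ v w : V, ∃ k : ℕ, (σ ^ k) v = w

/-- A bicirculant graph on `2n` vertices: an automorphism of order `n` with exactly two
orbits (necessarily both of length `n`). -/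
def IsBicirculant (Γ : SimpleGraph V) : Prop :=
  ∃ σ : Equiv.Perm V, IsAut Γ σ ∧ 2 * orderOf σ = Nat.card V ∧
    ∃ v w : V, (∀ u : V, (∃ k : ℕ, (σ ^ k) v = u) ∨ (∃ k : ℕ, (σ ^ k) w = u)) ∧
      ∀ k : ℕ, (σ ^ k) v ≠ w

/-- The orbit of `v` under a subgroup `H` of permutations. -/
def orb (H : Subgroup (Equiv.Perm V)) (v : V) : Set V := {w | ∃ σ ∈ H, σ v = w}

/-- `H` acts semiregularly: only the identity fixes a point. -/
def Semiregular (H : Subgroup (Equiv.Perm V)) : Prop :=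
  ∀ σ ∈ H, σ ≠ 1 → ∀ v : V, σ v ≠ v

/-- `H` acts regularly on the vertices. -/
def RegularOn (H : Subgroup (Equiv.Perm V)) : Prop := VertexTrans H ∧ Semiregular H

/-- `H` has exactly two orbits, namely those of `v` and `w`. -/
def TwoOrbits (H : Subgroup (Equiv.Perm V)) (v w : V) : Prop :=
  w ∉ orb H v ∧ ∀ u : V, u ∈ orb H v ∨ u ∈ orb H w

/-- `N` is a normal subgroup of `G`. -/
def NormalIn (N G : Subgroup (Equiv.Perm V)) : Prop :=
  N ≤ G ∧ ∀ g ∈ G, ∀ x ∈ N, g * x * g⁻¹ ∈ N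

/-- `N` has at most `k` orbits. -/
def AtMostOrbits (N : Subgroup (Equiv.Perm V)) (k : ℕ) : Prop :=
  ∃ f : Fin k → V, ∀ v : V, ∃ i, v ∈ orb N (f i)

/-- `N` has at least three orbits. -/
def AtLeastThreeOrbits (N : Subgroup (Equiv.Perm V)) : Prop :=
  ∃ a b c : V, b ∉ orb N a ∧ c ∉ orb N a ∧ c ∉ orb N b

/-- `G` is quasiprimitive: transitive, and every nontrivial normal subgroup is transitive. -/
def Quasiprimitive (G : Subgroup (Equiv.Perm V)) : Prop :=
  VertexTrans G ∧ ∀ N : Subgroup (Equiv.Perm V), NormalIn N G → N ≠ ⊥ → VertexTrans N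

/-- `G` is bi-quasiprimitive: transitive, every nontrivial normal subgroup has at most
two orbits, and some nontrivial normal subgroup has exactly two orbits. -/
def BiQuasiprimitive (G : Subgroup (Equiv.Perm V)) : Prop :=
  VertexTrans G ∧
    (∀ N : Subgroup (Equiv.Perm V), NormalIn N G → N ≠ ⊥ → AtMostOrbits N 2) ∧
    ∃ N : Subgroup (Equiv.Perm V), NormalIn N G ∧ N ≠ ⊥ ∧ ∃ v w : V, TwoOrbits N v w

/-- `B` is a block for the action of `G`. -/
def IsBlockFor (G : Subgroup (Equiv.Perm V)) (B : Set V) : Prop :=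
  ∀ σ ∈ G, ⇑σ '' B = B ∨ Disjoint (⇑σ '' B) B

/-- `G` is primitive: transitive and every block is trivial. -/
def Primitive (G : Subgroup (Equiv.Perm V)) : Prop :=
  VertexTrans G ∧ ∀ B : Set V, IsBlockFor G B → B.Subsingleton ∨ B = Set.univ

/-- `G` is 2-transitive on the vertices. -/
def TwoTrans (G : Subgroup (Equiv.Perm V)) : Prop :=
  ∀ u v u' v' : V, u ≠ v → u' ≠ v' → ∃ σ ∈ G, σ u = u' ∧ σ v = v'

/-- `G` is 2-transitive on the subset `Δ`. -/
def TwoTransOn (G : Subgroup (Equiv.Perm V)) (Δ : Set V) : Prop :=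
  ∀ u ∈ Δ, ∀ v ∈ Δ, ∀ u' ∈ Δ, ∀ v' ∈ Δ, u ≠ v → u' ≠ v' →
    ∃ σ ∈ G, σ u = u' ∧ σ v = v'

/-- `G` is transitive on the subset `Δ`. -/
def TransOn (G : Subgroup (Equiv.Perm V)) (Δ : Set V) : Prop :=
  ∀ u ∈ Δ, ∀ v ∈ Δ, ∃ σ ∈ G, σ u = v

/-- `G` acts faithfully on the subset `Δ`. -/
def FaithfulOn (G : Subgroup (Equiv.Perm V)) (Δ : Set V) : Prop :=
  ∀ σ ∈ G, (∀ v ∈ Δ, σ v = v) → σ = 1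

/-- `Δ₀, Δ₁` form a bipartition of the graph `Γ`. -/
structure IsBipartition (Γ : SimpleGraph V) (Δ₀ Δ₁ : Set V) : Prop where
  covers : Δ₀ ∪ Δ₁ = Set.univ
  disj : Disjoint Δ₀ Δ₁
  not_adj₀ : ∀ u ∈ Δ₀, ∀ v ∈ Δ₀, ¬Γ.Adj u v
  not_adj₁ : ∀ u ∈ Δ₁, ∀ v ∈ Δ₁, ¬Γ.Adj u v

/-- The setwise stabilizer of `Δ` in `G`. -/
def setStab (G : Subgroup (Equiv.Perm V)) (Δ : Set V) : Subgroup (Equiv.Perm V) where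
  carrier := {σ | σ ∈ G ∧ ⇑σ '' Δ = Δ}
  one_mem' := ⟨G.one_mem, by simp⟩
  mul_mem' := by
    rintro a b ⟨haG, haΔ⟩ ⟨hbG, hbΔ⟩
    refine ⟨G.mul_mem haG hbG, ?_⟩
    rw [show ⇑(a * b) = ⇑a ∘ ⇑b from rfl, Set.image_comp, hbΔ, haΔ]
  inv_mem' := by
    rintro a ⟨haG, haΔ⟩
    refine ⟨G.inv_mem haG, ?_⟩
    conv_lhs => rw [← haΔ]
    rw [show ⇑a⁻¹ = ⇑a.symm from rfl]
    exact Equiv.symm_image_image a Δ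

/-- The subgroup of `G` stabilizing both `Δ₀` and `Δ₁` setwise (`G⁺`). -/
def plusStab (G : Subgroup (Equiv.Perm V)) (Δ₀ Δ₁ : Set V) : Subgroup (Equiv.Perm V) :=
  setStab (setStab G Δ₀) Δ₁

/-- The stabilizer of the point `v` in `G`. -/
def stabPt (G : Subgroup (Equiv.Perm V)) (v : V) : Subgroup (Equiv.Perm V) :=
  setStab G {v}

/-- A transitive group `G` has rank `k`: every point stabilizer has exactly `k` orbits. -/
def HasRank (G : Subgroup (Equiv.Perm V)) (k : ℕ) : Prop :=
  ∀ v : V, ∃ f : Fin k → V,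
    (∀ i j : Fin k, i ≠ j → f j ∉ orb (stabPt G v) (f i)) ∧
    ∀ u : V, ∃ i : Fin k, u ∈ orb (stabPt G v) (f i)

/-- `G` is of affine type over `GF(2)`: it has a regular normal subgroup of exponent 2
(an elementary abelian 2-group); equivalently `G` embeds in `AGL(m,2)` in its natural action. -/
def AffineTypeTwo (G : Subgroup (Equiv.Perm V)) : Prop :=
  ∃ N : Subgroup (Equiv.Perm V), NormalIn N G ∧ RegularOn N ∧ ∀ σ ∈ N, σ * σ = 1

/-- `P` is a `G`-invariant partition of the vertex set. -/
structure IsInvPartition (G : Subgroup (Equiv.Perm V)) (P : Set (Set V)) : Prop where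
  nonempty : ∀ B ∈ P, B.Nonempty
  covers : ∀ v : V, ∃ B ∈ P, v ∈ B
  disj : ∀ B ∈ P, ∀ C ∈ P, B ≠ C → Disjoint B C
  inv : ∀ σ ∈ G, ∀ B ∈ P, ⇑σ '' B ∈ P

/-- `Q` is a block for the induced action of `G` on the partition `P`. -/
def PartBlock (G : Subgroup (Equiv.Perm V)) (P Q : Set (Set V)) : Prop :=
  Q ⊆ P ∧ ∀ σ ∈ G,
    (fun B => ⇑σ '' B) '' Q = Q ∨ Disjoint ((fun B => ⇑σ '' B) '' Q) Q

/-- `G` is transitive on the parts of `P`. -/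
def TransOnParts (G : Subgroup (Equiv.Perm V)) (P : Set (Set V)) : Prop :=
  ∀ B ∈ P, ∀ C ∈ P, ∃ σ ∈ G, ⇑σ '' B = C

/-- The induced action of `G` on the partition `P` is primitive. -/
def PrimitiveOnParts (G : Subgroup (Equiv.Perm V)) (P : Set (Set V)) : Prop :=
  TransOnParts G P ∧ ∀ Q : Set (Set V), PartBlock G P Q → Q.Subsingleton ∨ Q = P

/-- `G` acts faithfully on the partition `P`. -/
def FaithfulOnParts (G : Subgroup (Equiv.Perm V)) (P : Set (Set V)) : Prop :=
  ∀ σ ∈ G, (∀ B ∈ P, ⇑σ '' B = B) → σ = 1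

/-- The induced action of `G` on the partition `P` is 2-transitive. -/
def TwoTransOnParts (G : Subgroup (Equiv.Perm V)) (P : Set (Set V)) : Prop :=
  ∀ B ∈ P, ∀ C ∈ P, ∀ B' ∈ P, ∀ C' ∈ P, B ≠ C → B' ≠ C' →
    ∃ σ ∈ G, ⇑σ '' B = B' ∧ ⇑σ '' C = C'

/-- `H` has exactly two orbits of equal size on the subset `Δ`. -/
def TwoEqualOrbitsOn (H : Subgroup (Equiv.Perm V)) (Δ : Set V) : Prop :=
  ∃ a ∈ Δ, ∃ b ∈ Δ, orb H a ∪ orb H b = Δ ∧ Disjoint (orb H a) (orb H b) ∧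
    (orb H a).ncard = (orb H b).ncard

/-- `G` is almost simple: it has a nonabelian simple normal subgroup with trivial
centralizer, i.e. `S ≤ G ≤ Aut(S)` for a nonabelian simple group `S`. -/
def AlmostSimple (G : Subgroup (Equiv.Perm V)) : Prop :=
  ∃ S : Subgroup (Equiv.Perm V), S ≤ G ∧ (∀ g ∈ G, ∀ s ∈ S, g * s * g⁻¹ ∈ S) ∧
    IsSimpleGroup ↥S ∧ (∃ a ∈ S, ∃ b ∈ S, a * b ≠ b * a) ∧
    ∀ g ∈ G, (∀ s ∈ S, g * s = s * g) → g = 1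

/-- The setoid on `V` whose classes are the orbits of `N`. -/
def orbSetoid (N : Subgroup (Equiv.Perm V)) : Setoid V where
  r u v := ∃ σ ∈ N, σ u = v
  iseqv := by
    refine ⟨fun u => ⟨1, N.one_mem, rfl⟩, ?_, ?_⟩
    · rintro u v ⟨σ, hσ, rfl⟩
      exact ⟨σ⁻¹, N.inv_mem hσ, σ.symm_apply_apply u⟩
    · rintro u v w ⟨σ, hσ, rfl⟩ ⟨τ, hτ, rfl⟩
      exact ⟨τ * σ, N.mul_mem hτ hσ, rfl⟩

/-- The set of orbits of `N` on `V`. -/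
abbrev orbQuot (N : Subgroup (Equiv.Perm V)) : Type _ := Quotient (orbSetoid N)

/-- The orbit of `v`, as a vertex of the quotient. -/
def cls (N : Subgroup (Equiv.Perm V)) (v : V) : orbQuot N := Quotient.mk (orbSetoid N) v

/-- The quotient graph of `Γ` by a partition given as a setoid: parts are adjacent
iff some vertex of one is adjacent to some vertex of the other. -/
def setoidQuot (Γ : SimpleGraph V) (s : Setoid V) : SimpleGraph (Quotient s) where
  Adj A B := A ≠ B ∧ ∃ u v : V, Γ.Adj u v ∧ Quotient.mk s u = A ∧ Quotient.mk s v = B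
  symm := ⟨by
    rintro A B ⟨hne, u, v, h, hu, hv⟩
    exact ⟨hne.symm, v, u, h.symm, hv, hu⟩⟩
  loopless := ⟨by
    rintro A ⟨hne, -⟩
    exact hne rfl⟩

/-- The quotient graph `Γ_N` of `Γ` by the orbits of `N`. -/
def quotGraph (Γ : SimpleGraph V) (N : Subgroup (Equiv.Perm V)) : SimpleGraph (orbQuot N) :=
  setoidQuot Γ (orbSetoid N)

/-- `Γ` is an `r`-cover of the quotient graph `Γ_N`: for every edge `{B,C}` of `Γ_N`
and every `v ∈ B`, `v` has exactly `r` neighbours in `C`. -/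
def IsRCover (Γ : SimpleGraph V) (N : Subgroup (Equiv.Perm V)) (r : ℕ) : Prop :=
  ∀ (v : V) (C : orbQuot N), (quotGraph Γ N).Adj (cls N v) C →
    {u : V | Γ.Adj v u ∧ cls N u = C}.ncard = r

/-! ## The particular graphs -/

/-- The complete multipartite graph with `m` parts of size `b`. -/
def completeMultipartite (m b : ℕ) : SimpleGraph (Fin m × Fin b) :=
  SimpleGraph.fromRel fun u v => u.1 ≠ v.1

/-- `K_{n,n}` minus a perfect matching. -/
def knnMinus (n : ℕ) : SimpleGraph (Fin n ⊕ Fin n) :=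
  SimpleGraph.fromRel fun u v => ∃ i j : Fin n, i ≠ j ∧ u = Sum.inl i ∧ v = Sum.inr j

/-- The graph `G(2p,r)`: bipartite on two copies of `Z_p`, with `x ~ y'` iff `y - x`
lies in the unique subgroup of order `r` of the multiplicative group (the solutions
of `z^r = 1`). -/
def graphG (p r : ℕ) : SimpleGraph (ZMod p ⊕ ZMod p) :=
  SimpleGraph.fromRel fun u v =>
    ∃ x y : ZMod p, u = Sum.inl x ∧ v = Sum.inr y ∧ (y - x) ^ r = 1

/-- The circulant `Cay(p,e) = Cay(Z_p, S)` where `S` is the unique subgroup of order `e`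
of the multiplicative group of `Z_p` (the solutions of `z^e = 1`). -/
def cayCirc (p e : ℕ) : SimpleGraph (ZMod p) :=
  SimpleGraph.fromRel fun x y => (y - x) ^ e = 1

/-- The points (1-dimensional subspaces) of the projective space `PG(d-1,F)`. -/
def projPoint (F : Type*) [Field F] (d : ℕ) : Type _ :=
  {W : Submodule F (Fin d → F) // Module.finrank F W = 1}

/-- The hyperplanes (`(d-1)`-dimensional subspaces) of the projective space `PG(d-1,F)`. -/
def projHyp (F : Type*) [Field F] (d : ℕ) : Type _ :=
  {W : Submodule F (Fin d → F) // Module.finrank F W = d - 1}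

/-- The point-hyperplane incidence graph `B(PG(d-1,q))`. -/
def BPG (F : Type*) [Field F] (d : ℕ) : SimpleGraph (projPoint F d ⊕ projHyp F d) :=
  SimpleGraph.fromRel fun u v => ∃ (A : projPoint F d) (B : projHyp F d),
    u = Sum.inl A ∧ v = Sum.inr B ∧ A.1 ≤ B.1

/-- The point-hyperplane non-incidence graph `B'(PG(d-1,q))`. -/
def BPG' (F : Type*) [Field F] (d : ℕ) : SimpleGraph (projPoint F d ⊕ projHyp F d) :=
  SimpleGraph.fromRel fun u v => ∃ (A : projPoint F d) (B : projHyp F d),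
    u = Sum.inl A ∧ v = Sum.inr B ∧ A.1 ⊓ B.1 = ⊥

/-- The nonzero quadratic residues modulo 11. -/
def quadRes11 : Set (ZMod 11) := {1, 3, 4, 5, 9}

/-- The graph `B'(H(11))`: vertices are `Z_11` (left part) together with the translates
`R + i` of the residues `R` (right part, indexed by `i`), with `x` adjacent to `R + i`
iff `x ∉ R + i`. -/
def BH11' : SimpleGraph (ZMod 11 ⊕ ZMod 11) :=
  SimpleGraph.fromRel fun u v =>
    ∃ x i : ZMod 11, u = Sum.inl x ∧ v = Sum.inr i ∧ x - i ∉ quadRes11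

/-- The Hamming graph `H(2,4)`. -/
def hamming24 : SimpleGraph (Fin 4 × Fin 4) :=
  SimpleGraph.fromRel fun u v => (u.1 = v.1 ∧ u.2 ≠ v.2) ∨ (u.1 ≠ v.1 ∧ u.2 = v.2)

/-- The Petersen graph: the Kneser graph on 2-subsets of a 5-set. -/
def petersen : SimpleGraph {s : Finset (Fin 5) // s.card = 2} :=
  SimpleGraph.fromRel fun u v => Disjoint u.1 v.1

/-- The 5-dimensional hypercube graph. -/
def cube5 : SimpleGraph (Fin 5 → ZMod 2) :=
  SimpleGraph.fromRel fun x y => ∃! i : Fin 5, x i ≠ y i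

/-- The antipodal pairing on the 5-cube. -/
def antipodal5 : Setoid (Fin 5 → ZMod 2) where
  r x y := y = x ∨ y = x + 1
  iseqv := by
    have key : ∀ x : Fin 5 → ZMod 2, x + 1 + 1 = x := by
      intro x
      funext i
      show x i + 1 + 1 = x i
      have h : (1 + 1 : ZMod 2) = 0 := by decide
      rw [add_assoc, h, add_zero]
    refine ⟨fun x => Or.inl rfl, ?_, ?_⟩
    · rintro x y (rfl | rfl)
      · exact Or.inl rfl
      · exact Or.inr (key x).symm
    · rintro x y z (rfl | rfl) h2
      · exact h2
      · rcases h2 with rfl | rfl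
        · exact Or.inr rfl
        · exact Or.inl (key x)

/-- The folded 5-cube: the quotient of the 5-cube by the antipodal pairing. -/
def foldedCube5 : SimpleGraph (Quotient antipodal5) := setoidQuot cube5 antipodal5

/-- The Clebsch graph: the complement of the folded 5-cube. -/
def clebsch : SimpleGraph (Quotient antipodal5) := foldedCube5ᶜ

/-- The standard double cover of `Γ`. -/
def doubleCover (Γ : SimpleGraph V) : SimpleGraph (V × Bool) :=
  SimpleGraph.fromRel fun u v => Γ.Adj u.1 v.1 ∧ u.2 = true ∧ v.2 = false

/-- The swap `(x,i) ↦ (x, 3-i)` of the two levels of the standard double cover. -/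
def swapPerm (V : Type*) : Equiv.Perm (V × Bool) :=
  Equiv.prodCongr (Equiv.refl V) ⟨Bool.not, Bool.not, Bool.not_not, Bool.not_not⟩

/-- The Cayley graph of a group with connection set `S` (edges `{g, s*g}`). -/
def cayleyGraph {T : Type*} [Group T] (S : Set T) : SimpleGraph T :=
  SimpleGraph.fromRel fun g h => ∃ s ∈ S, h = s * g

/-! ## `PGL` and `PΓL` acting on projective points -/

/-- `g` is a `τ`-semilinear bijection. -/
def IsSemilinearBij (F : Type*) [Field F] (d : ℕ) (τ : F ≃+* F)
    (g : (Fin d → F) ≃ (Fin d → F)) : Prop :=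
  (∀ x y : Fin d → F, g (x + y) = g x + g y) ∧
  ∀ (c : F) (x : Fin d → F), g (c • x) = τ c • g x

/-- `g` is a linear bijection. -/
def IsLinearBij (F : Type*) [Field F] (d : ℕ) (g : (Fin d → F) ≃ (Fin d → F)) : Prop :=
  (∀ x y : Fin d → F, g (x + y) = g x + g y) ∧
  ∀ (c : F) (x : Fin d → F), g (c • x) = c • g x

/-- The permutation `π` of the projective points is induced by the bijection `g`. -/
def inducesProjMap (F : Type*) [Field F] (d : ℕ) (g : (Fin d → F) ≃ (Fin d → F))
    (π : Equiv.Perm (projPoint F d)) : Prop :=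
  ∀ W : projPoint F d, ((π W).1 : Set (Fin d → F)) = ⇑g '' ((W.1 : Submodule F (Fin d → F)) : Set (Fin d → F))

/-- `PΓL(d,F)` as a permutation group on the projective points: the permutations induced
by semilinear bijections. -/
def PGammaL (F : Type*) [Field F] (d : ℕ) : Subgroup (Equiv.Perm (projPoint F d)) where
  carrier := {π | ∃ (τ : F ≃+* F) (g : (Fin d → F) ≃ (Fin d → F)),
    IsSemilinearBij F d τ g ∧ inducesProjMap F d g π}
  one_mem' := ⟨RingEquiv.refl F, Equiv.refl _, ⟨fun _ _ => rfl, fun _ _ => rfl⟩,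
    fun W => by simp [inducesProjMap]⟩
  mul_mem' := by
    rintro a b ⟨τa, ga, ⟨haAdd, haSmul⟩, hIa⟩ ⟨τb, gb, ⟨hbAdd, hbSmul⟩, hIb⟩
    refine ⟨τb.trans τa, gb.trans ga, ⟨?_, ?_⟩, ?_⟩
    · intro x y
      simp only [Equiv.trans_apply, hbAdd, haAdd]
    · intro c x
      simp only [Equiv.trans_apply, hbSmul, haSmul, RingEquiv.trans_apply]
    · intro W
      have h2 := hIa (b W)
      have h := hIb W
      rw [show ((a * b) W) = a (b W) from rfl, h2, h,
        show ⇑(gb.trans ga) = ⇑ga ∘ ⇑gb from rfl, Set.image_comp]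
  inv_mem' := by
    rintro a ⟨τ, g, ⟨hAdd, hSmul⟩, hI⟩
    refine ⟨τ.symm, g.symm, ⟨?_, ?_⟩, ?_⟩
    · intro x y
      apply g.injective
      rw [hAdd, Equiv.apply_symm_apply, Equiv.apply_symm_apply, Equiv.apply_symm_apply]
    · intro c x
      apply g.injective
      rw [hSmul, Equiv.apply_symm_apply, Equiv.apply_symm_apply,
        RingEquiv.apply_symm_apply]
    · intro W
      have h := hI (a⁻¹ W)
      rw [show a (a⁻¹ W) = W from a.apply_symm_apply W] at h
      rw [h, Equiv.symm_image_image]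

/-- `PGL(d,F)` as a permutation group on the projective points: the permutations induced
by linear bijections. -/
def PGLsub (F : Type*) [Field F] (d : ℕ) : Subgroup (Equiv.Perm (projPoint F d)) where
  carrier := {π | ∃ g : (Fin d → F) ≃ (Fin d → F), IsLinearBij F d g ∧ inducesProjMap F d g π}
  one_mem' := ⟨Equiv.refl _, ⟨fun _ _ => rfl, fun _ _ => rfl⟩, fun W => by simp [inducesProjMap]⟩
  mul_mem' := by
    rintro a b ⟨ga, ⟨haAdd, haSmul⟩, hIa⟩ ⟨gb, ⟨hbAdd, hbSmul⟩, hIb⟩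
    refine ⟨gb.trans ga, ⟨?_, ?_⟩, ?_⟩
    · intro x y
      simp only [Equiv.trans_apply, hbAdd, haAdd]
    · intro c x
      simp only [Equiv.trans_apply, hbSmul, haSmul]
    · intro W
      have h2 := hIa (b W)
      have h := hIb W
      rw [show ((a * b) W) = a (b W) from rfl, h2, h,
        show ⇑(gb.trans ga) = ⇑ga ∘ ⇑gb from rfl, Set.image_comp]
  inv_mem' := by
    rintro a ⟨g, ⟨hAdd, hSmul⟩, hI⟩
    refine ⟨g.symm, ⟨?_, ?_⟩, ?_⟩
    · intro x y
      apply g.injective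
      rw [hAdd, Equiv.apply_symm_apply, Equiv.apply_symm_apply, Equiv.apply_symm_apply]
    · intro c x
      apply g.injective
      rw [hSmul, Equiv.apply_symm_apply, Equiv.apply_symm_apply]
    · intro W
      have h := hI (a⁻¹ W)
      rw [show a (a⁻¹ W) = W from a.apply_symm_apply W] at h
      rw [h, Equiv.symm_image_image]

/-- The graphs appearing in the main theorem (Theorem 1.1 (a)-(g)). -/
def IsBasicGraph {W : Type*} (Δ : SimpleGraph W) : Prop :=
  (∃ n : ℕ, 2 ≤ n ∧ Nonempty (Δ ≃g completeBipartiteGraph (Fin n) (Fin n))) ∨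
  (∃ n : ℕ, 3 ≤ n ∧ Nonempty (Δ ≃g (⊤ : SimpleGraph (Fin n)))) ∨
  (∃ n : ℕ, 3 ≤ n ∧ Nonempty (Δ ≃g completeMultipartite n 2)) ∨
  (∃ n : ℕ, 3 ≤ n ∧ Nonempty (Δ ≃g knnMinus n)) ∨
  (∃ p e : ℕ, p.Prime ∧ 1 < e ∧ e ∣ p - 1 ∧ Nonempty (Δ ≃g graphG p e)) ∨
  (∃ (F : Type) (iF : Field F) (_ : Finite F) (d : ℕ), 3 ≤ d ∧
    (Nonempty (Δ ≃g @BPG F iF d) ∨ Nonempty (Δ ≃g @BPG' F iF d))) ∨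
  (∃ p e : ℕ, p.Prime ∧ 2 ∣ e ∧ e ∣ p - 1 ∧ Nonempty (Δ ≃g cayCirc p e)) ∨
  Nonempty (Δ ≃g BH11') ∨
  (Nonempty (Δ ≃g petersen) ∨ Nonempty (Δ ≃g petersenᶜ)) ∨
  (Nonempty (Δ ≃g hamming24) ∨ Nonempty (Δ ≃g hamming24ᶜ)) ∨
  (Nonempty (Δ ≃g clebsch) ∨ Nonempty (Δ ≃g clebschᶜ))

section Helpers

variable {V : Type*}

lemma cls_eq_iff {N : Subgroup (Equiv.Perm V)} {u w : V} :
    cls N u = cls N w ↔ ∃ n ∈ N, n u = w := by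
  constructor
  · intro h
    exact Quotient.exact h
  · intro h
    exact Quotient.sound h

lemma cls_apply_eq {N G : Subgroup (Equiv.Perm V)} (hNn : NormalIn N G)
    {σ : Equiv.Perm V} (hσ : σ ∈ G) {u w : V} (h : cls N u = cls N w) :
    cls N (σ u) = cls N (σ w) := by
  rw [cls_eq_iff] at h ⊢
  obtain ⟨n, hn, hnu⟩ := h
  refine ⟨σ * n * σ⁻¹, hNn.2 σ hσ n hn, ?_⟩
  simp [Equiv.Perm.mul_apply, hnu]

lemma qperm_map {N G : Subgroup (Equiv.Perm V)} (hNn : NormalIn N G)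
    {τ : Equiv.Perm V} (hτ : τ ∈ G) :
    ∀ x y : V, (orbSetoid N).r x y → (orbSetoid N).r (τ x) (τ y) := by
  rintro x y ⟨n, hn, rfl⟩
  exact ⟨τ * n * τ⁻¹, hNn.2 τ hτ n hn, by simp [Equiv.Perm.mul_apply]⟩

lemma exists_qperm {Γ : SimpleGraph V} {G N : Subgroup (Equiv.Perm V)}
    (hG : G ≤ autGroup Γ) (hNn : NormalIn N G) {σ : Equiv.Perm V} (hσ : σ ∈ G) :
    ∃ π : Equiv.Perm (orbQuot N), π ∈ autGroup (quotGraph Γ N) ∧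
      ∀ v : V, π (cls N v) = cls N (σ v) := by
  have hone : ∀ (τ : Equiv.Perm V), τ ∈ G → ∀ x y : V,
      (quotGraph Γ N).Adj (cls N x) (cls N y) →
      (quotGraph Γ N).Adj (cls N (τ x)) (cls N (τ y)) := by
    rintro τ hτ x y ⟨hne, u, w, huw, hu, hw⟩
    refine ⟨?_, τ u, τ w, (hG hτ u w).mpr huw, ?_, ?_⟩
    · intro hcon
      apply hne
      have h2 := cls_apply_eq hNn (G.inv_mem hτ) hcon
      simpa using h2
    · exact cls_apply_eq hNn hτ hu
    · exact cls_apply_eq hNn hτ hw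
  refine ⟨⟨@Quotient.map V V (orbSetoid N) (orbSetoid N) ⇑σ (qperm_map hNn hσ),
      @Quotient.map V V (orbSetoid N) (orbSetoid N) ⇑σ⁻¹ (qperm_map hNn (G.inv_mem hσ)),
      ?_, ?_⟩, ?_, fun v => @Quotient.map_mk V V (orbSetoid N) (orbSetoid N) ⇑σ (qperm_map hNn hσ) v⟩
  · intro q
    induction q using Quotient.inductionOn with
    | _ v =>
      show cls N (σ⁻¹ (σ v)) = cls N v
      simp
  · intro q
    induction q using Quotient.inductionOn with
    | _ v =>
      show cls N (σ (σ⁻¹ v)) = cls N v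
      simp
  · intro A B
    induction A using Quotient.inductionOn with
    | _ x =>
    induction B using Quotient.inductionOn with
    | _ y =>
    show (quotGraph Γ N).Adj (cls N (σ x)) (cls N (σ y)) ↔
      (quotGraph Γ N).Adj (cls N x) (cls N y)
    constructor
    · intro h
      have h2 := hone σ⁻¹ (G.inv_mem hσ) _ _ h
      simpa using h2
    · exact hone σ hσ x y

end Helpers

section Helpers2

variable {V : Type*}

lemma qperm_pow {N : Subgroup (Equiv.Perm V)} (π : Equiv.Perm (orbQuot N))
    (σ : Equiv.Perm V) (hπ : ∀ v, π (cls N v) = cls N (σ v)) :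
    ∀ (k : ℕ) (v : V), (π ^ k) (cls N v) = cls N ((σ ^ k) v) := by
  intro k
  induction k with
  | zero => intro v; simp
  | succ k ih =>
    intro v
    rw [pow_succ, pow_succ]
    simp only [Equiv.Perm.mul_apply]
    rw [hπ v, ih (σ v)]

lemma orbit_ncard {X : Type*} [Finite X] (π : Equiv.Perm X) (A : X) (a : ℕ)
    (hapos : 0 < a) (hafix : (π ^ a) A = A)
    (hamin : ∀ k, 0 < k → k < a → (π ^ k) A ≠ A) :
    {U | ∃ k : ℕ, (π ^ k) A = U}.ncard = a ∧
      (∀ i j, i < a → j < a → (π ^ i) A = (π ^ j) A → i = j) ∧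
      ∀ k : ℕ, (π ^ k) A = (π ^ (k % a)) A := by
  have hmul : ∀ q : ℕ, (π ^ (a * q)) A = A := by
    intro q
    induction q with
    | zero => simp
    | succ q ih =>
      have : a * (q + 1) = a * q + a := by ring
      rw [this, pow_add]
      simp only [Equiv.Perm.mul_apply]
      rw [hafix, ih]
  have hmod : ∀ k : ℕ, (π ^ k) A = (π ^ (k % a)) A := by
    intro k
    conv_lhs => rw [show k = k % a + a * (k / a) from by rw [Nat.mod_add_div]]
    rw [pow_add]
    simp only [Equiv.Perm.mul_apply]
    rw [hmul]
  have hinj : ∀ i j, i < a → j < a → (π ^ i) A = (π ^ j) A → i = j := by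
    have key : ∀ i j, i ≤ j → j < a → (π ^ i) A = (π ^ j) A → i = j := by
      intro i j hij hja heq
      by_contra hne
      have hlt : 0 < j - i := by omega
      apply hamin (j - i) hlt (by omega)
      have h1 : (π ^ i) ((π ^ (j - i)) A) = (π ^ i) A := by
        rw [← Equiv.Perm.mul_apply, ← pow_add, show i + (j - i) = j from by omega]
        exact heq.symm
      exact (π ^ i).injective h1
    intro i j hi hj heq
    rcases le_total i j with h | h
    · exact key i j h hj heq
    · exact (key j i h hi heq.symm).symm
  refine ⟨?_, hinj, hmod⟩
  have : {U | ∃ k : ℕ, (π ^ k) A = U} = (fun i : Fin a => (π ^ (i : ℕ)) A) '' Set.univ := by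
    ext U
    constructor
    · rintro ⟨k, rfl⟩
      exact ⟨⟨k % a, Nat.mod_lt _ hapos⟩, Set.mem_univ _, (hmod k).symm⟩
    · rintro ⟨i, _, rfl⟩
      exact ⟨(i : ℕ), rfl⟩
  rw [this, Set.ncard_image_of_injective _ (fun i j hij => by
    exact Fin.ext (hinj _ _ i.isLt j.isLt hij)), Set.ncard_univ, Nat.card_eq_fintype_card,
    Fintype.card_fin]

lemma ncard_biUnion {α : Type*} [Finite α] (s : Finset ℕ) (f : ℕ → Set α)
    (hdisj : ∀ i ∈ s, ∀ j ∈ s, i ≠ j → Disjoint (f i) (f j)) :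
    (⋃ i ∈ s, f i).ncard = ∑ i ∈ s, (f i).ncard := by
  classical
  induction s using Finset.induction with
  | empty => simp
  | @insert x s' hx ih =>
    rw [Finset.set_biUnion_insert, Finset.sum_insert hx,
      Set.ncard_union_eq ?_ (Set.toFinite _) (Set.toFinite _),
      ih (fun i hi j hj hij => hdisj i (Finset.mem_insert_of_mem hi) j
        (Finset.mem_insert_of_mem hj) hij)]
    · rw [Set.disjoint_iUnion_right]
      intro i
      rw [Set.disjoint_iUnion_right]
      intro hi
      exact hdisj x (Finset.mem_insert_self x s') i (Finset.mem_insert_of_mem hi)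
        (fun h => hx (h ▸ hi))

lemma orb_semireg_ncard {H : Subgroup (Equiv.Perm V)} (hsemi : Semiregular H) (v : V) :
    (orb H v).ncard = Nat.card ↥H := by
  rw [← Nat.card_coe_set_eq]
  apply Nat.card_congr
  symm
  refine Equiv.ofBijective (fun σ => ⟨σ.1 v, σ.1, σ.2, rfl⟩) ⟨?_, ?_⟩
  · intro σ τ h
    have h1 : σ.1 v = τ.1 v := congrArg Subtype.val h
    have h2 : (τ.1⁻¹ * σ.1) v = v := by
      simp [Equiv.Perm.mul_apply, h1]
    by_contra hne
    refine hsemi (τ.1⁻¹ * σ.1) (H.mul_mem (H.inv_mem τ.2) σ.2) ?_ v h2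
    intro hcon
    apply hne
    have : τ.1⁻¹ * σ.1 = 1 := hcon
    have : σ.1 = τ.1 := by
      rw [← one_mul σ.1, ← mul_inv_cancel τ.1, mul_assoc, this, mul_one]
    exact Subtype.ext this
  · rintro ⟨x, σ, hσ, rfl⟩
    exact ⟨⟨σ, hσ⟩, rfl⟩

end Helpers2

/-- **Theorem 3.3.** Let `Γ` be a connected `G`-arc-transitive bicirculant (at least 3
vertices) over the cyclic subgroup `H` of `G`, and let `N ⊴ G` be maximal with at least
3 orbits. Then `Γ` is an `r`-cover of `Γ_N` with `r` dividing the valency, `Γ_N` is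
`G/N`-arc-transitive and is a circulant or a bicirculant over `HN/N`, and `G/N` is
faithful and quasiprimitive or bi-quasiprimitive on the quotient. -/
theorem stmt11 {V : Type*} [Fintype V] (Γ : SimpleGraph V)
    (G H N : Subgroup (Equiv.Perm V))
    (hG : G ≤ autGroup Γ) (hconn : Γ.Connected) (hat : ArcTrans Γ G)
    (hcard : 3 ≤ Nat.card V)
    (hH : H ≤ G) (hcyc : IsCyclic ↥H) (hsemi : Semiregular H)
    (v₀ v₁ : V) (h2orb : TwoOrbits H v₀ v₁)
    (hNn : NormalIn N G) (hN3 : AtLeastThreeOrbits N)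
    (hmax : ∀ M : Subgroup (Equiv.Perm V), NormalIn M G → N ≤ M →
      AtLeastThreeOrbits M → M = N) :
    -- `Γ` is an `r`-cover of `Γ_N`, `r` dividing the valency
    (∃ r : ℕ, IsRCover Γ N r ∧ ∀ v : V, r ∣ (Γ.neighborSet v).ncard) ∧
    -- `G` induces automorphisms of `Γ_N`, and `Γ_N` is `G/N`-arc-transitive
    (∀ σ ∈ G, ∃ π : Equiv.Perm (orbQuot N), π ∈ autGroup (quotGraph Γ N) ∧
      ∀ v : V, π (cls N v) = cls N (σ v)) ∧
    (∀ u v u' v' : V, (quotGraph Γ N).Adj (cls N u) (cls N v) →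
      (quotGraph Γ N).Adj (cls N u') (cls N v') →
      ∃ σ ∈ G, cls N (σ u) = cls N u' ∧ cls N (σ v) = cls N v') ∧
    -- `Γ_N` is a circulant or a bicirculant over `HN/N`
    (((∀ a w : V, ∃ σ ∈ H, cls N (σ a) = cls N w) ∧ IsCirculant (quotGraph Γ N)) ∨
     ((∃ a b : V, (∀ w : V, (∃ σ ∈ H, cls N (σ a) = cls N w) ∨
          (∃ σ ∈ H, cls N (σ b) = cls N w)) ∧ ¬ ∃ σ ∈ H, cls N (σ a) = cls N b) ∧
       IsBicirculant (quotGraph Γ N))) ∧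
    -- `G/N` is faithful on the quotient
    (∀ σ ∈ G, (∀ v : V, cls N (σ v) = cls N v) → σ ∈ N) ∧
    -- `G/N` is quasiprimitive or bi-quasiprimitive on the quotient
    ((∀ M : Subgroup (Equiv.Perm V), NormalIn M G → N ≤ M → M ≠ N →
        ∀ u v : V, ∃ σ ∈ M, cls N (σ u) = cls N v) ∨
     ((∀ M : Subgroup (Equiv.Perm V), NormalIn M G → N ≤ M → M ≠ N →
        ∃ a b : V, ∀ w : V, (∃ σ ∈ M, cls N (σ a) = cls N w) ∨
          (∃ σ ∈ M, cls N (σ b) = cls N w)) ∧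
      (∃ M : Subgroup (Equiv.Perm V), NormalIn M G ∧ N ≤ M ∧ M ≠ N ∧
        ∃ a b : V, (∀ w : V, (∃ σ ∈ M, cls N (σ a) = cls N w) ∨
            (∃ σ ∈ M, cls N (σ b) = cls N w)) ∧
          ¬ ∃ σ ∈ M, cls N (σ a) = cls N b))) := by
  classical
  have hfinQ : Finite (orbQuot N) := Quotient.finite _
  -- basic facts
  have hnontriv : Nontrivial V := by
    obtain ⟨a, b, c, h1, _, _⟩ := hN3
    exact ⟨a, b, fun h => h1 (h ▸ ⟨1, N.one_mem, rfl⟩)⟩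
  have hnb : ∀ v : V, ∃ u : V, Γ.Adj v u := by
    intro v
    obtain ⟨w, hw⟩ := exists_ne v
    obtain ⟨p⟩ := hconn.preconnected v w
    cases p with
    | nil => exact absurd rfl hw
    | cons h _ => exact ⟨_, h⟩
  have hvt : VertexTrans G := by
    intro u v
    obtain ⟨u', hu'⟩ := hnb u
    obtain ⟨v', hv'⟩ := hnb v
    obtain ⟨σ, hσG, hσu, _⟩ := hat u u' v v' hu' hv'
    exact ⟨σ, hσG, hσu⟩
  -- class facts
  have hcls_of_orb : ∀ (u x : V), x ∈ orb N u → cls N u = cls N x := by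
    rintro u x ⟨n, hn, rfl⟩
    exact cls_eq_iff.mpr ⟨n, hn, rfl⟩
  have horb_of_cls : ∀ (u x : V), cls N u = cls N x → x ∈ orb N u := by
    intro u x h
    obtain ⟨n, hn, hnx⟩ := cls_eq_iff.mp h
    exact ⟨n, hn, hnx⟩
  have hcls_inj : ∀ σ ∈ G, ∀ x y : V, cls N (σ x) = cls N (σ y) → cls N x = cls N y := by
    intro σ hσ x y h
    have h2 := cls_apply_eq hNn (G.inv_mem hσ) h
    simpa using h2
  -- Part 5: faithfulness via the kernel subgroup
  have faithful : ∀ σ ∈ G, (∀ v : V, cls N (σ v) = cls N v) → σ ∈ N := by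
    intro σ₀ hσ₀G hσ₀fix
    let K : Subgroup (Equiv.Perm V) :=
      { carrier := {σ | σ ∈ G ∧ ∀ v : V, cls N (σ v) = cls N v}
        one_mem' := ⟨G.one_mem, fun v => rfl⟩
        mul_mem' := by
          rintro a b ⟨haG, ha⟩ ⟨hbG, hb⟩
          refine ⟨G.mul_mem haG hbG, fun v => ?_⟩
          calc cls N ((a * b) v) = cls N (a (b v)) := rfl
            _ = cls N (b v) := ha (b v)
            _ = cls N v := hb v
        inv_mem' := by
          rintro a ⟨haG, ha⟩
          refine ⟨G.inv_mem haG, fun v => ?_⟩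
          have h := ha (a⁻¹ v)
          rw [show a (a⁻¹ v) = v from a.apply_symm_apply v] at h
          exact h.symm }
    have hKN : N ≤ K := by
      intro n hn
      exact ⟨hNn.1 hn, fun v => cls_eq_iff.mpr ⟨n⁻¹, N.inv_mem hn, by simp⟩⟩
    have hKnormal : NormalIn K G := by
      refine ⟨fun σ hσ => hσ.1, ?_⟩
      rintro g hg x ⟨hxG, hx⟩
      refine ⟨G.mul_mem (G.mul_mem hg hxG) (G.inv_mem hg), fun v => ?_⟩
      have h1 : cls N (x (g⁻¹ v)) = cls N (g⁻¹ v) := hx (g⁻¹ v)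
      have h2 := cls_apply_eq hNn hg h1
      calc cls N ((g * x * g⁻¹) v) = cls N (g (x (g⁻¹ v))) := rfl
        _ = cls N (g (g⁻¹ v)) := h2
        _ = cls N v := by rw [show g (g⁻¹ v) = v from g.apply_symm_apply v]
    have horbK : ∀ v : V, orb K v = orb N v := by
      intro v
      apply Set.Subset.antisymm
      · rintro x ⟨τ, hτ, rfl⟩
        exact horb_of_cls v (τ v) (hτ.2 v).symm
      · rintro x ⟨n, hn, rfl⟩
        exact ⟨n, hKN hn, rfl⟩
    have hK3 : AtLeastThreeOrbits K := by
      obtain ⟨a, b, c, h1, h2, h3⟩ := hN3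
      exact ⟨a, b, c, by rw [horbK]; exact h1, by rw [horbK]; exact h2,
        by rw [horbK]; exact h3⟩
    have hKeq : K = N := hmax K hKnormal hKN hK3
    have : σ₀ ∈ K := ⟨hσ₀G, hσ₀fix⟩
    rwa [hKeq] at this
  -- Part 1 preparation: every edge crosses N-orbits
  have hcross0 : ∃ u w : V, Γ.Adj u w ∧ cls N u ≠ cls N w := by
    by_contra hcon
    push_neg at hcon
    have hreach : ∀ x y : V, Γ.Reachable x y → cls N x = cls N y := by
      intro x y hr
      obtain ⟨p⟩ := hr
      induction p with
      | nil => rfl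
      | cons h p ih => exact (hcon _ _ h).trans ih
    obtain ⟨p, q, s, h1, _, _⟩ := hN3
    exact h1 (horb_of_cls p q (hreach p q (hconn.preconnected p q)))
  obtain ⟨u₀, w₀, hadj₀, hne₀⟩ := hcross0
  have hEC : ∀ x y : V, Γ.Adj x y → cls N x ≠ cls N y := by
    intro x y hxy hclseq
    obtain ⟨σ, hσG, hσu, hσw⟩ := hat u₀ w₀ x y hadj₀ hxy
    rw [← hσu, ← hσw] at hclseq
    exact hne₀ (hcls_inj σ hσG _ _ hclseq)
  -- the counting function
  have hcnt_inv : ∀ σ ∈ G, ∀ v w : V,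
      {u : V | Γ.Adj v u ∧ cls N u = cls N w}.ncard
        = {u : V | Γ.Adj (σ v) u ∧ cls N u = cls N (σ w)}.ncard := by
    intro σ hσ v w
    have himg : {u : V | Γ.Adj (σ v) u ∧ cls N u = cls N (σ w)}
        = ⇑σ '' {u : V | Γ.Adj v u ∧ cls N u = cls N w} := by
      ext x
      constructor
      · rintro ⟨hadj, hcls⟩
        refine ⟨σ⁻¹ x, ⟨?_, ?_⟩, by simp⟩
        · have h1 : Γ.Adj (σ v) (σ (σ⁻¹ x)) := by simpa using hadj
          exact (hG hσ v (σ⁻¹ x)).mp h1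
        · have h2 := cls_apply_eq hNn (G.inv_mem hσ) hcls
          simpa using h2
      · rintro ⟨u, ⟨hadj, hcls⟩, rfl⟩
        exact ⟨(hG hσ v u).mpr hadj, cls_apply_eq hNn hσ hcls⟩
    rw [himg, Set.ncard_image_of_injective _ σ.injective]
  have hcnt_const : ∀ (v : V) (C : orbQuot N), (quotGraph Γ N).Adj (cls N v) C →
      {u : V | Γ.Adj v u ∧ cls N u = C}.ncard
        = {u : V | Γ.Adj u₀ u ∧ cls N u = cls N w₀}.ncard := by
    intro v C hadj
    obtain ⟨hne, x, y, hxy, hx, hy⟩ := hadj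
    obtain ⟨σ, hσG, hσ1, hσ2⟩ := hat u₀ w₀ x y hadj₀ hxy
    have e1 : {u : V | Γ.Adj u₀ u ∧ cls N u = cls N w₀}.ncard
        = {u : V | Γ.Adj x u ∧ cls N u = cls N y}.ncard := by
      rw [hcnt_inv σ hσG u₀ w₀, hσ1, hσ2]
    obtain ⟨n, hnN, hnv⟩ := cls_eq_iff.mp (hx.symm : cls N v = cls N x)
    have e2 : {u : V | Γ.Adj x u ∧ cls N u = cls N y}.ncard
        = {u : V | Γ.Adj v u ∧ cls N u = cls N y}.ncard := by
      have h3 := hcnt_inv n (hNn.1 hnN) v y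
      rw [hnv] at h3
      have hny : cls N (n y) = cls N y := (cls_eq_iff.mpr ⟨n, hnN, rfl⟩).symm
      rw [hny] at h3
      exact h3.symm
    have hy' : cls N y = C := hy
    rw [← hy', e1, e2]
  constructor
  · -- Part 1: r-cover
    refine ⟨{u : V | Γ.Adj u₀ u ∧ cls N u = cls N w₀}.ncard, hcnt_const, ?_⟩
    intro v
    set r := {u : V | Γ.Adj u₀ u ∧ cls N u = cls N w₀}.ncard with hr
    have hfin := Set.toFinite (Γ.neighborSet v)
    set s := hfin.toFinset with hs
    have hcard : (Γ.neighborSet v).ncard = s.card := Set.ncard_eq_toFinset_card _ hfin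
    have htotal := Finset.card_eq_sum_card_fiberwise
      (f := fun u => cls N u) (s := s) (t := s.image (fun u => cls N u))
      (fun x hx => Finset.mem_image_of_mem _ hx)
    have hfib : ∀ b ∈ s.image (fun u => cls N u),
        (s.filter fun a => cls N a = b).card = r := by
      intro b hb
      obtain ⟨u, hu, rfl⟩ := Finset.mem_image.mp hb
      have huadj : Γ.Adj v u := hfin.mem_toFinset.mp hu
      have hqadj : (quotGraph Γ N).Adj (cls N v) (cls N u) :=
        ⟨hEC v u huadj, v, u, huadj, rfl, rfl⟩
      have heq : ((s.filter fun a => cls N a = cls N u) : Set V)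
          = {x : V | Γ.Adj v x ∧ cls N x = cls N u} := by
        ext x
        simp only [Finset.coe_filter, Set.mem_setOf_eq, hs, Set.Finite.mem_toFinset,
          SimpleGraph.mem_neighborSet]
      have := hcnt_const v (cls N u) hqadj
      rw [← this, ← heq, Set.ncard_coe_finset]
    rw [hcard, htotal, Finset.sum_congr rfl hfib, Finset.sum_const, smul_eq_mul]
    exact dvd_mul_left r _
  refine ⟨fun σ hσ => exists_qperm hG hNn hσ, ?_, ?_⟩
  · -- Part 3: quotient arc-transitivity
    rintro u v u' v' ⟨_, x, y, hxy, hx, hy⟩ ⟨_, x', y', hxy', hx', hy'⟩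
    obtain ⟨σ, hσG, h1, h2⟩ := hat x y x' y' hxy hxy'
    refine ⟨σ, hσG, ?_, ?_⟩
    · calc cls N (σ u) = cls N (σ x) := cls_apply_eq hNn hσG (hx.symm : cls N u = cls N x).symm.symm
        _ = cls N x' := by rw [h1]
        _ = cls N u' := hx'
    · calc cls N (σ v) = cls N (σ y) := cls_apply_eq hNn hσG (hy.symm : cls N v = cls N y).symm.symm
        _ = cls N y' := by rw [h2]
        _ = cls N v' := hy'
  -- set up cyclic generator for Part 4
  obtain ⟨g, hgen⟩ := hcyc.exists_generator
  have hhpH : (g : Equiv.Perm V) ∈ H := g.2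
  have hpow : ∀ σ ∈ H, ∃ k : ℕ, ((g : Equiv.Perm V)) ^ k = σ := by
    intro σ hσ
    have h1 : (⟨σ, hσ⟩ : ↥H) ∈ Submonoid.powers g :=
      mem_powers_iff_mem_zpowers.mpr (hgen ⟨σ, hσ⟩)
    obtain ⟨k, hk⟩ := h1
    refine ⟨k, ?_⟩
    have := congrArg (Subtype.val) hk
    simpa using this
  obtain ⟨π, hπaut, hπ⟩ := exists_qperm hG hNn (hH hhpH)
  have hπpow := qperm_pow π (g : Equiv.Perm V) hπ
  have hord_pos : 0 < orderOf π := orderOf_pos π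
  refine ⟨?_, faithful, ?_⟩
  · -- Part 4: circulant or bicirculant
    by_cases hH1 : ∀ w : V, ∃ σ ∈ H, cls N (σ v₀) = cls N w
    · left
      have htransH : ∀ a w : V, ∃ σ ∈ H, cls N (σ a) = cls N w := by
        intro a w
        obtain ⟨σa, hσa, ha⟩ := hH1 a
        obtain ⟨σw, hσw, hw⟩ := hH1 w
        refine ⟨σw * σa⁻¹, H.mul_mem hσw (H.inv_mem hσa), ?_⟩
        have h1 : cls N (σa⁻¹ a) = cls N v₀ := by
          have := cls_apply_eq hNn (hH (H.inv_mem hσa)) ha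
          simpa using this.symm
        calc cls N ((σw * σa⁻¹) a) = cls N (σw (σa⁻¹ a)) := rfl
          _ = cls N (σw v₀) := cls_apply_eq hNn (hH hσw) h1
          _ = cls N w := hw
      have htransπ : ∀ A B : orbQuot N, ∃ k : ℕ, (π ^ k) A = B := by
        intro A B
        obtain ⟨x, rfl⟩ := Quotient.exists_rep A
        obtain ⟨y, rfl⟩ := Quotient.exists_rep B
        obtain ⟨σ, hσ, hcl⟩ := htransH x y
        obtain ⟨k, rfl⟩ := hpow σ hσ
        exact ⟨k, (hπpow k x).trans hcl⟩
      have hexP : ∃ k, 0 < k ∧ (π ^ k) (cls N v₀) = cls N v₀ :=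
        ⟨orderOf π, hord_pos, by rw [pow_orderOf_eq_one]; rfl⟩
      obtain ⟨hapos, hafix⟩ := Nat.find_spec hexP
      have hamin : ∀ k, 0 < k → k < Nat.find hexP → (π ^ k) (cls N v₀) ≠ cls N v₀ :=
        fun k hk hka hne => Nat.find_min hexP hka ⟨hk, hne⟩
      obtain ⟨hacard, hainj, hamod⟩ := orbit_ncard π (cls N v₀) (Nat.find hexP) hapos hafix hamin
      have horbuniv : {U | ∃ k : ℕ, (π ^ k) (cls N v₀) = U} = Set.univ :=
        Set.eq_univ_of_forall (fun B => htransπ (cls N v₀) B)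
      have hcardQ : Nat.card (orbQuot N) = Nat.find hexP := by
        rw [← Set.ncard_univ, ← horbuniv, hacard]
      have hpa1 : π ^ (Nat.find hexP) = 1 := by
        apply Equiv.ext
        intro B
        obtain ⟨k, rfl⟩ := htransπ (cls N v₀) B
        show (π ^ Nat.find hexP) ((π ^ k) (cls N v₀)) = _
        rw [← Equiv.Perm.mul_apply, ← pow_add, add_comm, pow_add, Equiv.Perm.mul_apply, hafix]
        simp
      have hord_eq : orderOf π = Nat.find hexP :=
        le_antisymm (Nat.le_of_dvd hapos (orderOf_dvd_of_pow_eq_one hpa1))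
          (Nat.find_min' hexP ⟨hord_pos, by rw [pow_orderOf_eq_one]; rfl⟩)
      exact ⟨htransH, π, hπaut, by rw [hord_eq, hcardQ], htransπ⟩
    · right
      push_neg at hH1
      obtain ⟨w₁, hw₁⟩ := hH1
      have hD0 : ∀ σ ∈ H, cls N (σ v₀) ≠ cls N v₁ := by
        intro σ hσ hcon
        rcases h2orb.2 w₁ with ⟨ρ, hρ, rfl⟩ | ⟨ρ, hρ, rfl⟩
        · exact hw₁ ρ hρ rfl
        · refine hw₁ (ρ * σ) (H.mul_mem hρ hσ) ?_
          calc cls N ((ρ * σ) v₀) = cls N (ρ (σ v₀)) := rfl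
            _ = cls N (ρ v₁) := cls_apply_eq hNn (hH hρ) hcon
      have hD : ∀ σ ∈ H, ∀ τ ∈ H, cls N (σ v₀) ≠ cls N (τ v₁) := by
        intro σ hσ τ hτ hcon
        apply hD0 (τ⁻¹ * σ) (H.mul_mem (H.inv_mem hτ) hσ)
        have h2 := cls_apply_eq hNn (hH (H.inv_mem hτ)) hcon
        simpa using h2
      have hcover : ∀ w : V, (∃ σ ∈ H, cls N (σ v₀) = cls N w) ∨
          (∃ σ ∈ H, cls N (σ v₁) = cls N w) := by
        intro w
        rcases h2orb.2 w with ⟨σ, hσ, rfl⟩ | ⟨σ, hσ, rfl⟩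
        · exact Or.inl ⟨σ, hσ, rfl⟩
        · exact Or.inr ⟨σ, hσ, rfl⟩
      refine ⟨⟨v₀, v₁, hcover, fun ⟨σ, hσ, hc⟩ => hD0 σ hσ hc⟩, ?_⟩
      -- IsBicirculant
      have hfixordA : (π ^ orderOf π) (cls N v₀) = cls N v₀ := by
        rw [pow_orderOf_eq_one]; rfl
      have hfixordB : (π ^ orderOf π) (cls N v₁) = cls N v₁ := by
        rw [pow_orderOf_eq_one]; rfl
      have hexA : ∃ k, 0 < k ∧ (π ^ k) (cls N v₀) = cls N v₀ := ⟨_, hord_pos, hfixordA⟩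
      have hexB : ∃ k, 0 < k ∧ (π ^ k) (cls N v₁) = cls N v₁ := ⟨_, hord_pos, hfixordB⟩
      obtain ⟨hapos, hafix⟩ := Nat.find_spec hexA
      obtain ⟨hbpos, hbfix⟩ := Nat.find_spec hexB
      have hamin : ∀ k, 0 < k → k < Nat.find hexA → (π ^ k) (cls N v₀) ≠ cls N v₀ :=
        fun k hk hka hne => Nat.find_min hexA hka ⟨hk, hne⟩
      have hbmin : ∀ k, 0 < k → k < Nat.find hexB → (π ^ k) (cls N v₁) ≠ cls N v₁ :=
        fun k hk hka hne => Nat.find_min hexB hka ⟨hk, hne⟩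
      obtain ⟨hacard, hainj, hamod⟩ := orbit_ncard π (cls N v₀) (Nat.find hexA) hapos hafix hamin
      obtain ⟨hbcard, hbinj, hbmod⟩ := orbit_ncard π (cls N v₁) (Nat.find hexB) hbpos hbfix hbmin
      have hgpow : ∀ k : ℕ, ((g : Equiv.Perm V) ^ k) ∈ H := fun k => H.pow_mem hhpH k
      -- orbits are disjoint
      have hdisj : Disjoint {U | ∃ k : ℕ, (π ^ k) (cls N v₀) = U}
          {U | ∃ k : ℕ, (π ^ k) (cls N v₁) = U} := by
        rw [Set.disjoint_left]
        rintro U ⟨i, rfl⟩ ⟨j, hj⟩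
        refine hD _ (hgpow i) _ (hgpow j) ?_
        rw [← hπpow i v₀, ← hπpow j v₁]
        exact hj.symm
      have huniv : {U | ∃ k : ℕ, (π ^ k) (cls N v₀) = U}
          ∪ {U | ∃ k : ℕ, (π ^ k) (cls N v₁) = U} = Set.univ := by
        apply Set.eq_univ_of_forall
        intro U
        obtain ⟨u, rfl⟩ := Quotient.exists_rep U
        rcases hcover u with ⟨σ, hσ, hc⟩ | ⟨σ, hσ, hc⟩
        · obtain ⟨k, rfl⟩ := hpow σ hσ
          exact Or.inl ⟨k, by rw [hπpow k v₀]; exact hc⟩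
        · obtain ⟨k, rfl⟩ := hpow σ hσ
          exact Or.inr ⟨k, by rw [hπpow k v₁]; exact hc⟩
      have hcardsum : Nat.card (orbQuot N) = Nat.find hexA + Nat.find hexB := by
        rw [← Set.ncard_univ, ← huniv,
          Set.ncard_union_eq hdisj (Set.toFinite _) (Set.toFinite _), hacard, hbcard]
      -- blocks inside H-orbits
      have hblock_subA : ∀ k : ℕ, orb N (((g : Equiv.Perm V) ^ k) v₀) ⊆ orb H v₀ := by
        intro k x hx
        rcases h2orb.2 x with h | h
        · exact h
        · exfalso
          obtain ⟨τ, hτ, rfl⟩ := h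
          exact hD _ (hgpow k) τ hτ (hcls_of_orb _ _ hx)
      have hblock_subB : ∀ k : ℕ, orb N (((g : Equiv.Perm V) ^ k) v₁) ⊆ orb H v₁ := by
        intro k x hx
        rcases h2orb.2 x with h | h
        · exfalso
          obtain ⟨τ, hτ, rfl⟩ := h
          exact hD τ hτ _ (hgpow k) (hcls_of_orb _ _ hx).symm
        · exact h
      have horbN_card : ∀ u w : V, (orb N u).ncard = (orb N w).ncard := by
        intro u w
        obtain ⟨σ, hσG, rfl⟩ := hvt u w
        have himg : orb N (σ u) = ⇑σ '' orb N u := by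
          ext x
          constructor
          · rintro ⟨n, hn, rfl⟩
            exact ⟨(σ⁻¹ * n * σ) u, ⟨σ⁻¹ * n * σ,
              hNn.2 σ⁻¹ (G.inv_mem hσG) n hn, rfl⟩, by simp [Equiv.Perm.mul_apply]⟩
          · rintro ⟨y, ⟨n, hn, rfl⟩, rfl⟩
            exact ⟨σ * n * σ⁻¹, hNn.2 σ hσG n hn, by simp [Equiv.Perm.mul_apply]⟩
        rw [himg, Set.ncard_image_of_injective _ σ.injective]
      -- the H-orbits as disjoint unions of blocks
      have hUA : orb H v₀ = ⋃ j ∈ Finset.range (Nat.find hexA),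
          orb N (((g : Equiv.Perm V) ^ j) v₀) := by
        apply Set.Subset.antisymm
        · rintro x ⟨σ, hσ, rfl⟩
          obtain ⟨k, rfl⟩ := hpow σ hσ
          simp only [Set.mem_iUnion, exists_prop]
          refine ⟨k % Nat.find hexA, Finset.mem_range.mpr (Nat.mod_lt _ hapos), ?_⟩
          apply horb_of_cls
          rw [← hπpow, ← hπpow]
          exact (hamod k).symm
        · intro x hx
          simp only [Set.mem_iUnion, exists_prop] at hx
          obtain ⟨j, _, hj⟩ := hx
          exact hblock_subA j hj
      have hUB : orb H v₁ = ⋃ j ∈ Finset.range (Nat.find hexB),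
          orb N (((g : Equiv.Perm V) ^ j) v₁) := by
        apply Set.Subset.antisymm
        · rintro x ⟨σ, hσ, rfl⟩
          obtain ⟨k, rfl⟩ := hpow σ hσ
          simp only [Set.mem_iUnion, exists_prop]
          refine ⟨k % Nat.find hexB, Finset.mem_range.mpr (Nat.mod_lt _ hbpos), ?_⟩
          apply horb_of_cls
          rw [← hπpow, ← hπpow]
          exact (hbmod k).symm
        · intro x hx
          simp only [Set.mem_iUnion, exists_prop] at hx
          obtain ⟨j, _, hj⟩ := hx
          exact hblock_subB j hj
      have hsizeA : (orb H v₀).ncard = (Nat.find hexA) * (orb N v₀).ncard := by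
        rw [hUA, ncard_biUnion _ _ ?_]
        · rw [Finset.sum_congr rfl (fun j _ => horbN_card (((g : Equiv.Perm V) ^ j) v₀) v₀),
            Finset.sum_const, Finset.card_range, smul_eq_mul]
        · intro i hi j hj hij
          rw [Set.disjoint_left]
          rintro x hxi hxj
          refine hij (hainj i j (Finset.mem_range.mp hi) (Finset.mem_range.mp hj) ?_)
          rw [hπpow i v₀, hπpow j v₀]
          exact (hcls_of_orb _ _ hxi).trans (hcls_of_orb _ _ hxj).symm
      have hsizeB : (orb H v₁).ncard = (Nat.find hexB) * (orb N v₀).ncard := by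
        rw [hUB, ncard_biUnion _ _ ?_]
        · rw [Finset.sum_congr rfl (fun j _ => horbN_card (((g : Equiv.Perm V) ^ j) v₁) v₀),
            Finset.sum_const, Finset.card_range, smul_eq_mul]
        · intro i hi j hj hij
          rw [Set.disjoint_left]
          rintro x hxi hxj
          refine hij (hbinj i j (Finset.mem_range.mp hi) (Finset.mem_range.mp hj) ?_)
          rw [hπpow i v₁, hπpow j v₁]
          exact (hcls_of_orb _ _ hxi).trans (hcls_of_orb _ _ hxj).symm
      have hmpos : 0 < (orb N v₀).ncard :=
        (Set.ncard_pos (Set.toFinite _)).mpr ⟨v₀, 1, N.one_mem, rfl⟩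
      have hab : Nat.find hexA = Nat.find hexB := by
        have h1 : (Nat.find hexA) * (orb N v₀).ncard = (Nat.find hexB) * (orb N v₀).ncard := by
          rw [← hsizeA, ← hsizeB, orb_semireg_ncard hsemi v₀, orb_semireg_ncard hsemi v₁]
        exact Nat.eq_of_mul_eq_mul_right hmpos h1
      have hpa1 : π ^ (Nat.find hexA) = 1 := by
        apply Equiv.ext
        intro U
        have hU : U ∈ {U | ∃ k : ℕ, (π ^ k) (cls N v₀) = U}
            ∪ {U | ∃ k : ℕ, (π ^ k) (cls N v₁) = U} := huniv.symm ▸ Set.mem_univ U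
        show (π ^ Nat.find hexA) U = U
        rcases hU with ⟨k, rfl⟩ | ⟨k, rfl⟩
        · rw [← Equiv.Perm.mul_apply, ← pow_add, add_comm, pow_add,
            Equiv.Perm.mul_apply, hafix]
        · rw [← Equiv.Perm.mul_apply, ← pow_add, add_comm, pow_add,
            Equiv.Perm.mul_apply, hab, hbfix]
      have hord_eq : orderOf π = Nat.find hexA :=
        le_antisymm (Nat.le_of_dvd hapos (orderOf_dvd_of_pow_eq_one hpa1))
          (Nat.find_min' hexA ⟨hord_pos, hfixordA⟩)
      refine ⟨π, hπaut, ?_, cls N v₀, cls N v₁, ?_, ?_⟩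
      · rw [hord_eq, hcardsum, hab]
        ring
      · intro U
        have hU : U ∈ {U | ∃ k : ℕ, (π ^ k) (cls N v₀) = U}
            ∪ {U | ∃ k : ℕ, (π ^ k) (cls N v₁) = U} := huniv.symm ▸ Set.mem_univ U
        exact hU
      · intro k hk
        rw [hπpow k v₀] at hk
        exact hD _ (hgpow k) 1 H.one_mem (by simpa using hk)
  · -- Part 6: quasiprimitive or bi-quasiprimitive
    have hM2 : ∀ M : Subgroup (Equiv.Perm V), NormalIn M G → N ≤ M → M ≠ N →
        ∀ p q s : V, q ∈ orb M p ∨ s ∈ orb M p ∨ s ∈ orb M q := by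
      intro M hMn hNM hMN p q s
      by_contra hcon
      push_neg at hcon
      exact hMN (hmax M hMn hNM ⟨p, q, s, hcon.1, hcon.2.1, hcon.2.2⟩)
    have hlift : ∀ (M : Subgroup (Equiv.Perm V)), N ≤ M → ∀ p q : V,
        (∃ σ ∈ M, cls N (σ p) = cls N q) ↔ q ∈ orb M p := by
      intro M hNM p q
      constructor
      · rintro ⟨σ, hσ, hc⟩
        obtain ⟨n, hn, hnq⟩ := cls_eq_iff.mp hc
        exact ⟨n * σ, M.mul_mem (hNM hn) hσ, hnq⟩
      · rintro ⟨σ, hσ, rfl⟩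
        exact ⟨σ, hσ, rfl⟩
    by_cases hq : ∀ M : Subgroup (Equiv.Perm V), NormalIn M G → N ≤ M → M ≠ N →
        ∀ u v : V, ∃ σ ∈ M, cls N (σ u) = cls N v
    · exact Or.inl hq
    · right
      push_neg at hq
      obtain ⟨M₀, hM₀n, hNM₀, hM₀N, u, v, huv0⟩ := hq
      have huv : ¬∃ σ ∈ M₀, cls N (σ u) = cls N v := by
        rintro ⟨σ, hσ, hc⟩
        exact huv0 σ hσ hc
      constructor
      · intro M hMn hNM hMN
        by_cases hM : ∃ b : V, b ∉ orb M u
        · obtain ⟨b, hb⟩ := hM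
          refine ⟨u, b, fun w => ?_⟩
          rcases hM2 M hMn hNM hMN u b w with h | h | h
          · exact absurd h hb
          · exact Or.inl ((hlift M hNM u w).mpr h)
          · exact Or.inr ((hlift M hNM b w).mpr h)
        · push_neg at hM
          exact ⟨u, u, fun w => Or.inl ((hlift M hNM u w).mpr (hM w))⟩
      · refine ⟨M₀, hM₀n, hNM₀, hM₀N, u, v, fun w => ?_, huv⟩
        rcases hM2 M₀ hM₀n hNM₀ hM₀N u v w with h | h | h
        · exact absurd ((hlift M₀ hNM₀ u v).mpr h) huv
        · exact Or.inl ((hlift M₀ hNM₀ u w).mpr h)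
        · exact Or.inr ((hlift M₀ hNM₀ v w).mpr h)

end ATB
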